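/- If a square of side greater than 0.6 is packed in the unit square, then at most 3 squares of side greater than 1/3 and at most 5 squares of side greater than 1/4 can be packed alongside it without overlap. -/

import Mathlib

/-- An axis-aligned packing of cubes (given by corner positions and side
lengths) in the unit `d`-cube: every cube fits in the bin, and distinct cubes
have disjoint interiors (they are separated in some coordinate). -/
def Packing (d : ℕ) {ι : Type} (pos : ι → Fin d → ℝ) (side : ι → ℝ) : Prop :=
  (∀ i j, 0 ≤ pos i j ∧ pos i j + side i ≤ 1) ∧
  (∀ i i', i ≠ i' → ∃ j, pos i j + side i ≤ pos i' j ∨ pos i' j + side i' ≤ pos i j)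

/-- Two squares with a common strict interior point cannot be separated. -/
lemma sep_aux {n : ℕ} {pos : Fin (n+1) → Fin 2 → ℝ} {side : Fin (n+1) → ℝ}
    (hP : Packing 2 pos side) {i i' : Fin (n+1)} (hne : i ≠ i') (p : Fin 2 → ℝ)
    (hi : ∀ j, pos i j < p j ∧ p j < pos i j + side i)
    (hi' : ∀ j, pos i' j < p j ∧ p j < pos i' j + side i') : False := by
  obtain ⟨j, hj⟩ := hP.2 i i' hne
  rcases hj with h | h <;>
    linarith [(hi j).1, (hi j).2, (hi' j).1, (hi' j).2]

/-- Generic grid-point counting lemma. -/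
lemma count_aux {n k : ℕ} {pos : Fin (n+1) → Fin 2 → ℝ} {side : Fin (n+1) → ℝ}
    (hP : Packing 2 pos side) (grid : Fin k → ℝ)
    (f : Fin (n+1) → Fin k × Fin k)
    (hf : ∀ i, pos i 0 < grid (f i).1 ∧ grid (f i).1 < pos i 0 + side i ∧
      pos i 1 < grid (f i).2 ∧ grid (f i).2 < pos i 1 + side i)
    (Q : Finset (Fin k × Fin k))
    (hQ : ∀ p ∈ Q, pos 0 0 < grid p.1 ∧ grid p.1 < pos 0 0 + side 0 ∧
      pos 0 1 < grid p.2 ∧ grid p.2 < pos 0 1 + side 0) :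
    n ≤ k * k - Q.card := by
  have key : (Finset.univ.erase (0 : Fin (n+1))).card ≤
      ((Finset.univ : Finset (Fin k × Fin k)) \ Q).card := by
    apply Finset.card_le_card_of_injOn f
    · intro i hi
      have hi0 : i ≠ 0 := Finset.ne_of_mem_erase hi
      simp only [Finset.mem_coe, Finset.mem_sdiff, Finset.mem_univ, true_and]
      intro hmem
      obtain ⟨h1, h2, h3, h4⟩ := hQ (f i) hmem
      obtain ⟨g1, g2, g3, g4⟩ := hf i
      exact sep_aux hP hi0 ![grid (f i).1, grid (f i).2]
        (by intro j; fin_cases j <;> simp <;> constructor <;> assumption)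
        (by intro j; fin_cases j <;> simp <;> constructor <;> assumption)
    · intro i hi i' hi' hfe
      by_contra hne
      obtain ⟨g1, g2, g3, g4⟩ := hf i
      obtain ⟨h1, h2, h3, h4⟩ := hf i'
      rw [hfe] at g1 g2 g3 g4
      exact sep_aux hP hne ![grid (f i').1, grid (f i').2]
        (by intro j; fin_cases j <;> simp <;> constructor <;> assumption)
        (by intro j; fin_cases j <;> simp <;> constructor <;> assumption)
  have h1 : (Finset.univ.erase (0 : Fin (n+1))).card = n := by
    simp [Finset.card_erase_of_mem]
  have h2 : ((Finset.univ : Finset (Fin k × Fin k)) \ Q).card = k * k - Q.card := by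
    rw [Finset.card_sdiff_of_subset (Finset.subset_univ Q)]
    simp
  omega
/-- 1D: an interval of length > 1/3 in [0,1] strictly contains 1/3 or 2/3. -/
lemma dim3 (x s : ℝ) (h0 : 0 ≤ x) (h1 : x + s ≤ 1) (hs : 1/3 < s) :
    ∃ a : Fin 2, x < ![(1:ℝ)/3, 2/3] a ∧ ![(1:ℝ)/3, 2/3] a < x + s := by
  by_cases h : x < 1/3
  · exact ⟨0, by simpa using h, by simp; linarith⟩
  · exact ⟨1, by simp; linarith, by simp; linarith⟩

/-- 1D: an interval of length > 1/4 in [0,1] strictly contains 1/4, 1/2 or 3/4. -/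
lemma dim4 (x s : ℝ) (h0 : 0 ≤ x) (h1 : x + s ≤ 1) (hs : 1/4 < s) :
    ∃ a : Fin 3, x < ![(1:ℝ)/4, 1/2, 3/4] a ∧ ![(1:ℝ)/4, 1/2, 3/4] a < x + s := by
  by_cases h : x < 1/4
  · exact ⟨0, by simpa using h, by simp; linarith⟩
  by_cases h' : x < 1/2
  · exact ⟨1, by simp; linarith, by simp; linarith⟩
  · exact ⟨2, by simp; linarith, by simp; linarith⟩

/-- 1D: an interval of length > 0.6 in [0,1] strictly contains two of 1/4, 1/2, 3/4. -/
lemma dim4big (x s : ℝ) (h0 : 0 ≤ x) (h1 : x + s ≤ 1) (hs : 0.6 < s) :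
    ∃ a b : Fin 3, a ≠ b ∧
      (x < ![(1:ℝ)/4, 1/2, 3/4] a ∧ ![(1:ℝ)/4, 1/2, 3/4] a < x + s) ∧
      (x < ![(1:ℝ)/4, 1/2, 3/4] b ∧ ![(1:ℝ)/4, 1/2, 3/4] b < x + s) := by
  norm_num at hs
  by_cases h : x < 1/4
  · exact ⟨0, 1, by decide, ⟨by simpa using h, by simp; linarith⟩,
      ⟨by simp; linarith, by simp; linarith⟩⟩
  · exact ⟨1, 2, by decide, ⟨by simp; linarith, by simp; linarith⟩,
      ⟨by simp; linarith, by simp; linarith⟩⟩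

/-- If a square of side greater than `0.6` is packed in the unit square, then
at most 3 further squares of side greater than `1/3`, and at most 5 further
squares of side greater than `1/4`, can be packed alongside it. -/
theorem stmt_13 :
    (∀ (n : ℕ) (pos : Fin (n + 1) → Fin 2 → ℝ) (side : Fin (n + 1) → ℝ),
      Packing 2 pos side → 0.6 < side 0 →
      (∀ i : Fin (n + 1), i ≠ 0 → 1 / 3 < side i) → n ≤ 3) ∧
    (∀ (n : ℕ) (pos : Fin (n + 1) → Fin 2 → ℝ) (side : Fin (n + 1) → ℝ),
      Packing 2 pos side → 0.6 < side 0 →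
      (∀ i : Fin (n + 1), i ≠ 0 → 1 / 4 < side i) → n ≤ 5) := by
  constructor
  · intro n pos side hP hs0 hsi
    have hside : ∀ i : Fin (n+1), 1/3 < side i := by
      intro i
      by_cases hi : i = 0
      · subst hi; norm_num at hs0 ⊢; linarith
      · exact hsi i hi
    have hex : ∀ i : Fin (n+1), ∃ p : Fin 2 × Fin 2,
        pos i 0 < ![(1:ℝ)/3, 2/3] p.1 ∧ ![(1:ℝ)/3, 2/3] p.1 < pos i 0 + side i ∧
        pos i 1 < ![(1:ℝ)/3, 2/3] p.2 ∧ ![(1:ℝ)/3, 2/3] p.2 < pos i 1 + side i := by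
      intro i
      obtain ⟨a, ha1, ha2⟩ := dim3 (pos i 0) (side i) (hP.1 i 0).1 (hP.1 i 0).2 (hside i)
      obtain ⟨b, hb1, hb2⟩ := dim3 (pos i 1) (side i) (hP.1 i 1).1 (hP.1 i 1).2 (hside i)
      exact ⟨(a, b), ha1, ha2, hb1, hb2⟩
    choose f hf using hex
    have := count_aux hP ![(1:ℝ)/3, 2/3] f hf {f 0}
      (by
        intro p hp
        simp only [Finset.mem_singleton] at hp
        subst hp
        exact hf 0)
    simpa using this
  · intro n pos side hP hs0 hsi
    have hside : ∀ i : Fin (n+1), 1/4 < side i := by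
      intro i
      by_cases hi : i = 0
      · subst hi; norm_num at hs0 ⊢; linarith
      · exact hsi i hi
    have hex : ∀ i : Fin (n+1), ∃ p : Fin 3 × Fin 3,
        pos i 0 < ![(1:ℝ)/4, 1/2, 3/4] p.1 ∧ ![(1:ℝ)/4, 1/2, 3/4] p.1 < pos i 0 + side i ∧
        pos i 1 < ![(1:ℝ)/4, 1/2, 3/4] p.2 ∧ ![(1:ℝ)/4, 1/2, 3/4] p.2 < pos i 1 + side i := by
      intro i
      obtain ⟨a, ha1, ha2⟩ := dim4 (pos i 0) (side i) (hP.1 i 0).1 (hP.1 i 0).2 (hside i)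
      obtain ⟨b, hb1, hb2⟩ := dim4 (pos i 1) (side i) (hP.1 i 1).1 (hP.1 i 1).2 (hside i)
      exact ⟨(a, b), ha1, ha2, hb1, hb2⟩
    choose f hf using hex
    obtain ⟨a0, a1, ha, hA0, hA1⟩ :=
      dim4big (pos 0 0) (side 0) (hP.1 0 0).1 (hP.1 0 0).2 hs0
    obtain ⟨b0, b1, hb, hB0, hB1⟩ :=
      dim4big (pos 0 1) (side 0) (hP.1 0 1).1 (hP.1 0 1).2 hs0
    have hcard : (({a0, a1} : Finset (Fin 3)) ×ˢ ({b0, b1} : Finset (Fin 3))).card = 4 := by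
      rw [Finset.card_product]
      rw [Finset.card_insert_of_notMem (by simpa using ha),
        Finset.card_insert_of_notMem (by simpa using hb)]
      simp
    have := count_aux hP ![(1:ℝ)/4, 1/2, 3/4] f hf
      (({a0, a1} : Finset (Fin 3)) ×ˢ ({b0, b1} : Finset (Fin 3)))
      (by
        intro p hp
        simp only [Finset.mem_product, Finset.mem_insert, Finset.mem_singleton] at hp
        obtain ⟨hp1, hp2⟩ := hp
        refine ⟨?_, ?_, ?_, ?_⟩
        · rcases hp1 with h | h <;> subst h
          · exact hA0.1
          · exact hA1.1
        · rcases hp1 with h | h <;> subst h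
          · exact hA0.2
          · exact hA1.2
        · rcases hp2 with h | h <;> subst h
          · exact hB0.1
          · exact hB1.1
        · rcases hp2 with h | h <;> subst h
          · exact hB0.2
          · exact hB1.2)
    rw [hcard] at this
    simpa using this
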